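/- For every integer n ≥ 0 and every real number t with |t| < 1, the series ∑_{j=0}^∞ t^j (j+1)^n converges and equals A_n(t)/(1-t)^{n+1}. -/

import Mathlib

open scoped Classical

noncomputable def ascentCount {n : ℕ} (π : Equiv.Perm (Fin n)) : ℕ :=
  ((Finset.range (n - 1)).filter (fun j =>
    ∃ h : j + 1 < n, π ⟨j, Nat.lt_of_succ_lt h⟩ < π ⟨j + 1, h⟩)).card

noncomputable def eulerian (n k : ℕ) : ℕ :=
  (Finset.univ.filter (fun π : Equiv.Perm (Fin n) => ascentCount π = k)).card

noncomputable def eulerianPoly (n : ℕ) (t : ℝ) : ℝ :=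
  if n = 0 then 1 else ∑ k ∈ Finset.range n, (eulerian n k : ℝ) * t ^ k

namespace EulerianAux

open Finset

/-- the predicate "ascent at position i" -/
def ascP {n : ℕ} (π : Equiv.Perm (Fin n)) (i : ℕ) : Prop :=
  ∃ h : i + 1 < n, π ⟨i, Nat.lt_of_succ_lt h⟩ < π ⟨i + 1, h⟩

lemma ascentCount_eq {n : ℕ} (π : Equiv.Perm (Fin n)) :
    ascentCount π = ((Finset.range (n - 1)).filter (ascP π)).card := by
  unfold ascentCount ascP
  congr

/-- number of ascents strictly below `i` -/
noncomputable def aBelow {n : ℕ} (π : Equiv.Perm (Fin n)) (i : ℕ) : ℕ :=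
  ((Finset.range i).filter (ascP π)).card

lemma aBelow_succ {n : ℕ} (π : Equiv.Perm (Fin n)) (i : ℕ) :
    aBelow π (i + 1) = aBelow π i + if ascP π i then 1 else 0 := by
  unfold aBelow
  rw [Finset.range_add_one, Finset.filter_insert]
  split
  · rw [Finset.card_insert_of_notMem (by simp)]
  · simp

lemma aBelow_le {n : ℕ} (π : Equiv.Perm (Fin n)) (i : ℕ) : aBelow π i ≤ i :=
  (Finset.card_filter_le _ _).trans (by simp)

lemma aBelow_le_add {n : ℕ} (π : Equiv.Perm (Fin n)) {a b : ℕ} (hab : a ≤ b) :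
    aBelow π b ≤ aBelow π a + (b - a) := by
  obtain ⟨d, rfl⟩ := Nat.exists_eq_add_of_le hab
  induction d with
  | zero => simp
  | succ d ih =>
    rw [← Nat.add_assoc, aBelow_succ]
    split <;> omega

lemma aBelow_le_ascentCount {n : ℕ} (π : Equiv.Perm (Fin n)) (i : ℕ) :
    aBelow π i ≤ ascentCount π := by
  rw [ascentCount_eq]
  apply Finset.card_le_card
  intro j hj
  simp only [Finset.mem_filter, Finset.mem_range] at hj ⊢
  obtain ⟨-, hasc⟩ := hj
  have h := hasc.1
  exact ⟨by omega, hasc⟩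

lemma ascentCount_le {N : ℕ} (π : Equiv.Perm (Fin (N + 1))) : ascentCount π ≤ N := by
  rw [ascentCount_eq]
  exact (Finset.card_filter_le _ _).trans (by simp)

lemma ascentCount_eq_aBelow {N : ℕ} (π : Equiv.Perm (Fin (N + 1))) :
    ascentCount π = aBelow π N := by
  rw [ascentCount_eq]; rfl



lemma card_strictMono (k m : ℕ) :
    ((Finset.univ : Finset (Fin k → Fin m)).filter StrictMono).card = m.choose k := by
  have key : ((Finset.univ : Finset (Fin k → Fin m)).filter StrictMono).card
      = (Finset.powersetCard k (Finset.univ : Finset (Fin m))).card := by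
    refine Finset.card_bij (fun (h : Fin k → Fin m) _ => Finset.image h Finset.univ) ?_ ?_ ?_
    · intro h hh
      simp only [Finset.mem_filter] at hh
      rw [Finset.mem_powersetCard]
      exact ⟨Finset.subset_univ _,
        by rw [Finset.card_image_of_injective _ hh.2.injective, Finset.card_univ, Fintype.card_fin]⟩
    · intro f hf g hg hfg
      simp only [Finset.mem_filter] at hf hg
      have hcard : (Finset.image f Finset.univ).card = k := by
        rw [Finset.card_image_of_injective _ hf.2.injective, Finset.card_univ, Fintype.card_fin]
      have h1 := Finset.orderEmbOfFin_unique hcard (f := f)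
        (fun x => Finset.mem_image_of_mem _ (Finset.mem_univ x)) hf.2
      have h2 := Finset.orderEmbOfFin_unique hcard (f := g)
        (fun x => hfg ▸ Finset.mem_image_of_mem _ (Finset.mem_univ x)) hg.2
      rw [h1, h2]
    · intro s hs
      rw [Finset.mem_powersetCard] at hs
      refine ⟨s.orderEmbOfFin hs.2, Finset.mem_filter.2 ⟨Finset.mem_univ _,
        (s.orderEmbOfFin hs.2).strictMono⟩, ?_⟩
      apply Finset.eq_of_subset_of_card_le
      · intro x hx
        simp only [Finset.mem_image] at hx
        obtain ⟨i, -, rfl⟩ := hx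
        exact Finset.orderEmbOfFin_mem s hs.2 i
      · rw [Finset.card_image_of_injective _ (s.orderEmbOfFin hs.2).injective,
          Finset.card_univ, Fintype.card_fin, hs.2]

  rw [key, Finset.card_powersetCard, Finset.card_univ, Fintype.card_fin]

/-- pair a tuple with positions, reversing position order -/
def Ff {n x : ℕ} (f : Fin n → Fin x) : Fin n → Fin x ×ₗ (Fin n)ᵒᵈ :=
  fun i => toLex (f i, OrderDual.toDual i)

lemma Ff_inj {n x : ℕ} (f : Fin n → Fin x) : Function.Injective (Ff f) := by
  intro a b h
  have := congrArg (fun p => (ofLex p).2) h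
  simpa [Ff] using this

lemma sort_eq_iff {N x : ℕ} (f : Fin (N + 1) → Fin x) (π : Equiv.Perm (Fin (N + 1))) :
    Tuple.sort (Ff f) = π ↔ ∀ i : Fin N,
      f (π i.castSucc) ≤ f (π i.succ) ∧
        (π i.castSucc < π i.succ → f (π i.castSucc) < f (π i.succ)) := by
  rw [eq_comm, Tuple.eq_sort_iff]
  constructor
  · rintro ⟨hmono, -⟩ i
    have h := hmono (Fin.castSucc_le_succ i)
    simp only [Function.comp_apply, Ff] at h
    rw [Prod.Lex.le_iff] at h
    constructor
    · rcases h with h | ⟨h, -⟩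
      · exact h.le
      · exact h.le
    · intro hlt
      rcases h with h | ⟨heq, hle⟩
      · exact h
      · exfalso
        have h2 : π i.succ ≤ π i.castSucc := hle
        exact absurd hlt (not_lt.2 h2)
  · intro h
    constructor
    · rw [Fin.monotone_iff_le_succ]
      intro i
      simp only [Function.comp_apply, Ff]
      rw [Prod.Lex.le_iff]
      rcases lt_or_eq_of_le (h i).1 with hlt | heq
      · exact Or.inl hlt
      · refine Or.inr ⟨heq, ?_⟩
        show π i.succ ≤ π i.castSucc
        rcases lt_trichotomy (π i.castSucc) (π i.succ) with hc | hc | hc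
        · exact absurd heq ((h i).2 hc).ne
        · exact hc.ge
        · exact hc.le
    · intro i j hij heq
      exfalso
      have := Ff_inj f heq
      have := π.injective this
      omega

lemma sm_gap {N m : ℕ} {h : Fin (N + 1) → Fin m} (hm : StrictMono h) :
    ∀ a b : Fin (N + 1), (a : ℕ) ≤ b → (h a : ℕ) + ((b : ℕ) - a) ≤ h b := by
  suffices H : ∀ d (a b : Fin (N + 1)), (a : ℕ) + d = b → (h a : ℕ) + d ≤ h b by
    intro a b hab
    exact H _ a b (by omega)
  intro d
  induction d with
  | zero => intro a b hab; have : a = b := Fin.ext (by omega); simp [this]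
  | succ d ih =>
    intro a b hab
    have hbN : (a : ℕ) + d < N + 1 := by omega
    have h1 := ih a ⟨(a : ℕ) + d, hbN⟩ rfl
    have h2 : h ⟨(a : ℕ) + d, hbN⟩ < h b := hm (by simp [Fin.lt_def]; omega)
    rw [Fin.lt_def] at h2
    omega



lemma ascP_iff {N : ℕ} (π : Equiv.Perm (Fin (N + 1))) (i : Fin N) :
    ascP π (i : ℕ) ↔ π i.castSucc < π i.succ := by
  unfold ascP
  constructor
  · rintro ⟨h, hl⟩
    have e1 : (⟨(i : ℕ), Nat.lt_of_succ_lt h⟩ : Fin (N + 1)) = i.castSucc := by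
      simp [Fin.ext_iff]
    have e2 : (⟨(i : ℕ) + 1, h⟩ : Fin (N + 1)) = i.succ := by
      simp [Fin.ext_iff]
    rwa [e1, e2] at hl
  · intro hl
    have hi := i.isLt
    refine ⟨by omega, ?_⟩
    convert hl using 2 <;> simp [Fin.ext_iff]

lemma card_fiber {N : ℕ} (j : ℕ) (π : Equiv.Perm (Fin (N + 1))) :
    ((Finset.univ : Finset (Fin (N + 1) → Fin (j + 1))).filter
        (fun f => Tuple.sort (Ff f) = π)).card
      = (j + (N + 1) - ascentCount π).choose (N + 1) := by
  set s := ascentCount π with hs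
  have hsN : s ≤ N := ascentCount_le π
  have hsB : s = aBelow π N := ascentCount_eq_aBelow π
  rw [← card_strictMono (N + 1) (j + (N + 1) - s)]
  have hoff : ∀ i : Fin (N + 1), (i : ℕ) - aBelow π i ≤ N - s := by
    intro i
    have h1 : aBelow π N ≤ aBelow π (i : ℕ) + (N - (i : ℕ)) := by
      rcases le_or_gt (i : ℕ) N with hiN | hiN
      · exact aBelow_le_add π hiN
      · have : (i : ℕ) = N := by have := i.isLt; omega
        simp [this]
    have h2 := aBelow_le π (i : ℕ)
    have h3 := aBelow_le_ascentCount π (i : ℕ)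
    have h4 := i.isLt
    omega
  have hfb : ∀ (f : Fin (N + 1) → Fin (j + 1)) (i : Fin (N + 1)),
      (f (π i) : ℕ) + ((i : ℕ) - aBelow π i) < j + (N + 1) - s := by
    intro f i
    have h1 := (f (π i)).isLt
    have h2 := hoff i
    omega
  refine Finset.card_bij
    (fun (f : Fin (N + 1) → Fin (j + 1)) _ =>
      fun i : Fin (N + 1) => (⟨(f (π i) : ℕ) + ((i : ℕ) - aBelow π i), hfb f i⟩ :
        Fin (j + (N + 1) - s))) ?_ ?_ ?_
  · -- maps into strictMono filter
    intro f hf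
    simp only [Finset.mem_filter, Finset.mem_univ, true_and] at hf ⊢
    have hcond := (sort_eq_iff f π).1 hf
    rw [Fin.strictMono_iff_lt_succ]
    intro i
    have hc := hcond i
    have hab := aBelow_succ π (i : ℕ)
    have h2 := aBelow_le π (i : ℕ)
    simp only [Fin.lt_def, Fin.coe_castSucc, Fin.val_succ]
    by_cases ha : ascP π (i : ℕ)
    · have hlt := (ascP_iff π i).1 ha
      have hstrict := hc.2 hlt
      rw [Fin.lt_def] at hstrict
      rw [if_pos ha] at hab
      omega
    · have hle := hc.1
      rw [Fin.le_def] at hle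
      rw [if_neg ha] at hab
      omega
  · -- injective
    intro f hf g hg heq
    funext z
    have h1 := congrFun heq (π.symm z)
    rw [Fin.mk.injEq] at h1
    have h2 : f (π (π.symm z)) = g (π (π.symm z)) := Fin.ext (by omega)
    rwa [Equiv.apply_symm_apply] at h2
  · -- surjective
    intro h hh
    simp only [Finset.mem_filter, Finset.mem_univ, true_and] at hh
    have hub : ∀ i : Fin (N + 1), (h i : ℕ) + (N - (i : ℕ)) ≤ j + N - s := by
      intro i
      have h1 := sm_gap hh i ⟨N, Nat.lt_succ_self N⟩ (by have := i.isLt; simp; omega)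
      have h2 := (h ⟨N, Nat.lt_succ_self N⟩).isLt
      simp at h1
      omega
    have hlb : ∀ i : Fin (N + 1), (i : ℕ) ≤ (h i : ℕ) := by
      intro i
      have h1 := sm_gap hh ⟨0, Nat.succ_pos N⟩ i (by simp)
      simp at h1
      omega
    have hbound : ∀ z : Fin (N + 1),
        (h (π.symm z) : ℕ) - (((π.symm z : Fin (N + 1)) : ℕ) - aBelow π (π.symm z)) < j + 1 := by
      intro z
      have h1 := hub (π.symm z)
      have h2 := aBelow_le π ((π.symm z : Fin (N + 1)) : ℕ)
      have h3 := aBelow_le_ascentCount π ((π.symm z : Fin (N + 1)) : ℕ)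
      have h4 := (π.symm z).isLt
      omega
    refine ⟨fun z => ⟨_, hbound z⟩, ?_, ?_⟩
    · -- in the fiber
      simp only [Finset.mem_filter, Finset.mem_univ, true_and]
      rw [sort_eq_iff]
      intro i
      have hadj : h i.castSucc < h i.succ := hh Fin.castSucc_lt_succ
      rw [Fin.lt_def] at hadj
      have hab := aBelow_succ π (i : ℕ)
      have h2 := aBelow_le π (i : ℕ)
      have h3 := hlb i.castSucc
      simp only [Equiv.symm_apply_apply, Fin.le_def, Fin.lt_def, Fin.coe_castSucc,
        Fin.val_succ]
      by_cases ha : ascP π (i : ℕ)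
      · rw [if_pos ha] at hab
        have hgoal : (h i.castSucc : ℕ) - ((i : ℕ) - aBelow π (i : ℕ)) <
            (h i.succ : ℕ) - ((i : ℕ) + 1 - aBelow π ((i : ℕ) + 1)) := by
          rw [hab]
          simp only [Fin.coe_castSucc] at h3
          omega
        exact ⟨hgoal.le, fun _ => hgoal⟩
      · rw [if_neg ha] at hab
        constructor
        · simp only [Fin.coe_castSucc] at h3
          omega
        · intro hlt
          exact absurd ((ascP_iff π i).2 hlt) ha
    · -- round trip
      simp only
      funext i
      apply Fin.ext
      simp only [Equiv.symm_apply_apply]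
      have h1 := hlb i
      have h2 := aBelow_le π (i : ℕ)
      omega


lemma worpitzky (N j : ℕ) :
    (j + 1) ^ (N + 1)
      = ∑ k ∈ Finset.range (N + 1),
          eulerian (N + 1) k * (j + (N + 1) - k).choose (N + 1) := by
  have h1 : ((Finset.univ : Finset (Fin (N + 1) → Fin (j + 1)))).card = (j + 1) ^ (N + 1) := by
    rw [Finset.card_univ, Fintype.card_fun, Fintype.card_fin, Fintype.card_fin]
  rw [← h1,
    Finset.card_eq_sum_card_fiberwise (f := fun f => Tuple.sort (Ff f))
      (t := Finset.univ) (fun _ _ => Finset.mem_univ _)]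
  calc ∑ π ∈ Finset.univ, ((Finset.univ.filter fun f => Tuple.sort (Ff f) = π)).card
      = ∑ π : Equiv.Perm (Fin (N + 1)), (j + (N + 1) - ascentCount π).choose (N + 1) :=
        Finset.sum_congr rfl (fun π _ => card_fiber j π)
    _ = ∑ k ∈ Finset.range (N + 1), ∑ π ∈ Finset.univ.filter
          (fun π : Equiv.Perm (Fin (N + 1)) => ascentCount π = k),
          (j + (N + 1) - ascentCount π).choose (N + 1) :=
        (Finset.sum_fiberwise_of_maps_to
          (fun π _ => Finset.mem_range.2 (Nat.lt_succ_of_le (ascentCount_le π))) _).symm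
    _ = ∑ k ∈ Finset.range (N + 1),
          eulerian (N + 1) k * (j + (N + 1) - k).choose (N + 1) := by
        refine Finset.sum_congr rfl fun k hk => ?_
        rw [Finset.sum_congr rfl
            (fun π hπ => by rw [(Finset.mem_filter.1 hπ).2]),
          Finset.sum_const, smul_eq_mul, eulerian]

lemma hasSum_choose_shift {t : ℝ} (ht : |t| < 1) {n k : ℕ} (hk : k ≤ n) :
    HasSum (fun j : ℕ => ((j + n - k).choose n : ℝ) * t ^ j) (t ^ k / (1 - t) ^ (n + 1)) := by
  have hnorm : ‖t‖ < 1 := by rwa [Real.norm_eq_abs]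
  have h0 := hasSum_choose_mul_geometric_of_norm_lt_one (𝕜 := ℝ) n hnorm
  have h1 := h0.mul_left (t ^ k)
  have h2 : (fun m : ℕ => t ^ k * (((m + n).choose n : ℝ) * t ^ m))
      = fun m : ℕ => ((m + k + n - k).choose n : ℝ) * t ^ (m + k) := by
    funext m
    rw [show m + k + n - k = m + n by omega, pow_add]
    ring
  rw [h2] at h1
  have h3 := (hasSum_nat_add_iff
    (f := fun j : ℕ => ((j + n - k).choose n : ℝ) * t ^ j) k).1 h1
  have h4 : ∑ i ∈ Finset.range k, ((i + n - k).choose n : ℝ) * t ^ i = 0 := by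
    apply Finset.sum_eq_zero
    intro i hi
    rw [Finset.mem_range] at hi
    rw [Nat.choose_eq_zero_of_lt (by omega)]
    simp
  rw [h4, add_zero] at h3
  have h5 : t ^ k * (1 / (1 - t) ^ (n + 1)) = t ^ k / (1 - t) ^ (n + 1) := by ring
  rwa [h5] at h3

end EulerianAux

theorem hasSum_eulerianPoly_div (n : ℕ) (t : ℝ) (ht : |t| < 1) :
    HasSum (fun j : ℕ => t ^ j * ((j : ℝ) + 1) ^ n)
      (eulerianPoly n t / (1 - t) ^ (n + 1)) := by
  cases n with
  | zero =>
    have h := hasSum_geometric_of_abs_lt_one ht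
    have hv : eulerianPoly 0 t / (1 - t) ^ (0 + 1) = (1 - t)⁻¹ := by
      rw [eulerianPoly]
      norm_num
    rw [hv]
    simpa using h
  | succ N =>
    have key : (fun j : ℕ => t ^ j * ((j : ℝ) + 1) ^ (N + 1))
        = fun j : ℕ => ∑ k ∈ Finset.range (N + 1),
            (eulerian (N + 1) k : ℝ) * (((j + (N + 1) - k).choose (N + 1) : ℝ) * t ^ j) := by
      funext j
      have hw := EulerianAux.worpitzky N j
      have hcast : ((j : ℝ) + 1) ^ (N + 1)
          = ∑ k ∈ Finset.range (N + 1),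
              (eulerian (N + 1) k : ℝ) * ((j + (N + 1) - k).choose (N + 1) : ℝ) := by
        exact_mod_cast congrArg (Nat.cast : ℕ → ℝ) hw
      rw [show t ^ j * ((j : ℝ) + 1) ^ (N + 1) = ((j : ℝ) + 1) ^ (N + 1) * t ^ j from by ring,
        hcast, Finset.sum_mul]
      exact Finset.sum_congr rfl fun k _ => by ring
    have hsum : HasSum
        (fun j : ℕ => ∑ k ∈ Finset.range (N + 1),
          (eulerian (N + 1) k : ℝ) * (((j + (N + 1) - k).choose (N + 1) : ℝ) * t ^ j))
        (∑ k ∈ Finset.range (N + 1),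
          (eulerian (N + 1) k : ℝ) * (t ^ k / (1 - t) ^ (N + 1 + 1))) := by
      apply hasSum_sum
      intro k hk
      exact (EulerianAux.hasSum_choose_shift ht
        (Finset.mem_range.1 hk).le).mul_left _
    rw [key]
    have hval : eulerianPoly (N + 1) t / (1 - t) ^ (N + 1 + 1)
        = ∑ k ∈ Finset.range (N + 1),
            (eulerian (N + 1) k : ℝ) * (t ^ k / (1 - t) ^ (N + 1 + 1)) := by
      rw [eulerianPoly, if_neg (Nat.succ_ne_zero N), Finset.sum_div]
      exact Finset.sum_congr rfl fun k _ => by ring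
    rw [hval]
    exact hsum
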